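/- Let H be as in the context (a real vector space with a symmetric bilinear form φ of signature (p,·)), and fix a basis x = (x₁,…,xₚ) of H₊. For a linear automorphism g of H preserving φ (i.e. φ(gu,gv) = φ(u,v) for all u,v), write g·x = (g x₁,…,g xₚ) and define or(g) to be the sign of G(g·x, x). Then: (i) or(g) ∈ {−1, +1} for every φ-preserving linear automorphism g; (ii) or(gh) = or(g)·or(h) for all φ-preserving linear automorphisms g, h; and (iii) there exists a φ-preserving linear automorphism g with or(g) = −1 (so the orientation map or is a surjective group homomorphism onto {±1}). -/

import Mathlib

open Submodule LinearMap Matrix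

section AuxSign

lemma aux_sign_mul_pos (a c : ℝ) (hc : 0 < c) : Real.sign (a * c) = Real.sign a := by
  rcases lt_trichotomy a 0 with h | h | h
  · rw [Real.sign_of_neg h, Real.sign_of_neg (mul_neg_of_neg_of_pos h hc)]
  · simp [h]
  · rw [Real.sign_of_pos h, Real.sign_of_pos (mul_pos h hc)]

lemma aux_sign_mul_ne (a b : ℝ) (ha : a ≠ 0) (hb : b ≠ 0) :
    Real.sign (a * b) = Real.sign a * Real.sign b := by
  rcases ha.lt_or_gt with h | h <;> rcases hb.lt_or_gt with h' | h'
  · rw [Real.sign_of_neg h, Real.sign_of_neg h', Real.sign_of_pos (mul_pos_of_neg_of_neg h h')]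
    norm_num
  · rw [Real.sign_of_neg h, Real.sign_of_pos h', Real.sign_of_neg (mul_neg_of_neg_of_pos h h')]
    norm_num
  · rw [Real.sign_of_pos h, Real.sign_of_neg h', Real.sign_of_neg (mul_neg_of_pos_of_neg h h')]
    norm_num
  · rw [Real.sign_of_pos h, Real.sign_of_pos h', Real.sign_of_pos (mul_pos h h')]
    norm_num

lemma aux_sign_homotopy {f : ℝ → ℝ} (hf : Continuous f)
    (hno : ∀ t ∈ Set.Icc (0:ℝ) 1, f t ≠ 0) : Real.sign (f 1) = Real.sign (f 0) := by
  have h0 := hno 0 (by norm_num)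
  have h1 := hno 1 (by norm_num)
  rcases h0.lt_or_gt with h0' | h0' <;> rcases h1.lt_or_gt with h1' | h1'
  · rw [Real.sign_of_neg h0', Real.sign_of_neg h1']
  · exfalso
    obtain ⟨t, ht, hft⟩ := intermediate_value_Icc (by norm_num : (0:ℝ) ≤ 1) hf.continuousOn
      ⟨le_of_lt h0', le_of_lt h1'⟩
    exact hno t ht hft
  · exfalso
    obtain ⟨t, ht, hft⟩ := intermediate_value_Icc' (by norm_num : (0:ℝ) ≤ 1) hf.continuousOn
      ⟨le_of_lt h1', le_of_lt h0'⟩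
    exact hno t ht hft
  · rw [Real.sign_of_pos h0', Real.sign_of_pos h1']

end AuxSign

noncomputable section AuxOrient

variable {H : Type*} [AddCommGroup H] [Module ℝ H]
variable (φ : LinearMap.BilinForm ℝ H)
variable (Hplus Hminus : Submodule ℝ H) (hcompl : IsCompl Hplus Hminus)
variable {p : ℕ}

/-- The "upper-left block" of `g` relative to the decomposition. -/
def Tg (g : H ≃ₗ[ℝ] H) : Hplus →ₗ[ℝ] Hplus :=
  (Hplus.projectionOnto Hminus hcompl) ∘ₗ ((g : H →ₗ[ℝ] H) ∘ₗ Hplus.subtype)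

/-- The "correction term" appearing in `Tg (h.trans g)`. -/
def Rg (g h : H ≃ₗ[ℝ] H) : Hplus →ₗ[ℝ] Hplus :=
  (Hplus.projectionOnto Hminus hcompl) ∘ₗ ((g : H →ₗ[ℝ] H) ∘ₗ
    ((LinearMap.id - Hplus.subtype ∘ₗ (Hplus.projectionOnto Hminus hcompl)) ∘ₗ
      ((h : H →ₗ[ℝ] H) ∘ₗ Hplus.subtype)))

lemma sub_proj_mem (w : H) :
    w - (Hplus.projectionOnto Hminus hcompl) w ∈ Hminus := by
  have := Submodule.projectionOnto_apply_left hcompl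
      ((Hplus.projectionOnto Hminus hcompl) w)
  rw [← Submodule.projectionOnto_apply_eq_zero_iff hcompl (x := w - _)]
  simp only [map_sub, this, sub_self]

lemma phi_proj (hφsymm : ∀ u v, φ u v = φ v u)
    (horth : ∀ u ∈ Hplus, ∀ v ∈ Hminus, φ u v = 0)
    (w u : H) (hu : u ∈ Hplus) :
    φ w u = φ ((Hplus.projectionOnto Hminus hcompl) w : H) u := by
  have h1 : φ (w - (Hplus.projectionOnto Hminus hcompl) w) u = 0 := by
    rw [hφsymm]; exact horth u hu _ (sub_proj_mem Hplus Hminus hcompl w)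
  have h2 : φ (w - ((Hplus.projectionOnto Hminus hcompl) w : H)) u
      = φ w u - φ ((Hplus.projectionOnto Hminus hcompl) w : H) u := by
    rw [φ.map_sub]; simp
  linarith [h2 ▸ h1]

lemma phi_coord (x : Fin p → H) (b : Module.Basis (Fin p) ℝ Hplus) (hb : ∀ i, (b i : H) = x i)
    (v : Hplus) (j : Fin p) :
    φ (v : H) (x j) = ∑ k, b.repr v k * φ (x k) (x j) := by
  have hv : ((∑ k, b.repr v k • b k : Hplus) : H) = (v : H) := by
    rw [Module.Basis.sum_repr b v]
  rw [← hv]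
  push_cast
  rw [map_sum]
  simp only [LinearMap.sum_apply]
  congr 1; ext k
  rw [_root_.map_smul]
  simp [hb k, smul_eq_mul]

lemma Mg_eq (hφsymm : ∀ u v, φ u v = φ v u)
    (horth : ∀ u ∈ Hplus, ∀ v ∈ Hminus, φ u v = 0)
    (x : Fin p → H) (b : Module.Basis (Fin p) ℝ Hplus) (hb : ∀ i, (b i : H) = x i)
    (g : H ≃ₗ[ℝ] H) :
    (Matrix.of fun i j => φ (g (x i)) (x j)) =
      (LinearMap.toMatrix b b (Tg Hplus Hminus hcompl g))ᵀ *
        (Matrix.of fun i j => φ (x i) (x j)) := by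
  ext i j
  have hx : ∀ i, x i ∈ Hplus := fun i => (hb i) ▸ (b i).2
  have h1 : φ (g (x i)) (x j)
      = φ ((Tg Hplus Hminus hcompl g (b i) : Hplus) : H) (x j) := by
    rw [phi_proj φ Hplus Hminus hcompl hφsymm horth (g (x i)) (x j) (hx j)]
    congr 2
    simp [Tg, hb]
  rw [Matrix.of_apply, h1, phi_coord φ Hplus x b hb]
  simp [Matrix.mul_apply, LinearMap.toMatrix_apply, mul_comm]

lemma X_posdef (hφsymm : ∀ u v, φ u v = φ v u)
    (hposdef : ∀ u ∈ Hplus, u ≠ 0 → 0 < φ u u)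
    (x : Fin p → H) (hxli : LinearIndependent ℝ x) (hx : ∀ i, x i ∈ Hplus) :
    (Matrix.of fun i j => φ (x i) (x j)).PosDef := by
  refine Matrix.PosDef.of_dotProduct_mulVec_pos ?_ ?_
  · ext i j
    simp [Matrix.conjTranspose_apply, hφsymm (x i) (x j)]
  · intro c hc
    set v : H := ∑ i, c i • x i with hv
    have hvmem : v ∈ Hplus := Submodule.sum_mem _ fun i _ => Submodule.smul_mem _ _ (hx i)
    have hvne : v ≠ 0 := by
      intro h0
      exact hc (Fintype.linearIndependent_iff.mp hxli c h0 |> funext)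
    have hpos := hposdef v hvmem hvne
    have : φ v v = star c ⬝ᵥ ((Matrix.of fun i j => φ (x i) (x j)) *ᵥ c) := by
      simp only [hv, map_sum, LinearMap.sum_apply, _root_.map_smul, LinearMap.smul_apply,
        dotProduct, Matrix.mulVec, Matrix.of_apply, star_trivial, dotProduct, smul_eq_mul,
        Finset.mul_sum]
      rw [Finset.sum_comm]
      congr 1; ext i; congr 1; ext j; ring
    rwa [this] at hpos

lemma Tg_inj (hposdef : ∀ u ∈ Hplus, u ≠ 0 → 0 < φ u u)
    (hnegdef : ∀ v ∈ Hminus, v ≠ 0 → φ v v < 0)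
    (g : H ≃ₗ[ℝ] H) (hg : ∀ u v, φ (g u) (g v) = φ u v) :
    Function.Injective (Tg Hplus Hminus hcompl g) := by
  rw [← LinearMap.ker_eq_bot, eq_bot_iff]
  intro v hv
  simp only [LinearMap.mem_ker] at hv
  rw [Submodule.mem_bot]
  by_contra hne
  have hv1 : (v : H) ≠ 0 := fun h => hne (Subtype.ext h)
  have hgv : g (v : H) ≠ 0 := fun h => hv1 (g.injective (by simpa using h))
  have hmem : g (v : H) ∈ Hminus := by
    rw [← Submodule.projectionOnto_apply_eq_zero_iff hcompl]
    exact hv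
  have h1 := hnegdef _ hmem hgv
  have h2 := hposdef _ v.2 hv1
  rw [hg] at h1
  linarith

lemma inj_det_ne (f : Hplus →ₗ[ℝ] Hplus) (hf : Function.Injective f) :
    LinearMap.det f ≠ 0 := by
  intro h0
  have := LinearMap.bot_lt_ker_of_det_eq_zero h0
  rw [LinearMap.ker_eq_bot.mpr hf] at this
  exact lt_irrefl _ this

lemma Tg_decomp (g h : H ≃ₗ[ℝ] H) :
    Tg Hplus Hminus hcompl (h.trans g) =
      (Tg Hplus Hminus hcompl g) ∘ₗ (Tg Hplus Hminus hcompl h)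
        + Rg Hplus Hminus hcompl g h := by
  ext v
  set π := Hplus.projectionOnto Hminus hcompl
  have : (h.trans g) (v : H) = g ((π (h v) : H)) + g ((h v : H) - (π (h v) : H)) := by
    rw [← map_add]
    simp
  simp only [Tg, Rg, LinearMap.add_apply, LinearMap.comp_apply, LinearEquiv.coe_coe,
    Submodule.subtype_apply, LinearMap.sub_apply, LinearMap.id_apply]
  rw [this, map_add]

lemma homotopy_inj (hφsymm : ∀ u v, φ u v = φ v u)
    (horth : ∀ u ∈ Hplus, ∀ v ∈ Hminus, φ u v = 0)
    (hposdef : ∀ u ∈ Hplus, u ≠ 0 → 0 < φ u u)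
    (hnegdef : ∀ v ∈ Hminus, v ≠ 0 → φ v v < 0)
    (b : Module.Basis (Fin p) ℝ Hplus)
    (g h : H ≃ₗ[ℝ] H) (hg : ∀ u v, φ (g u) (g v) = φ u v)
    (hh : ∀ u v, φ (h u) (h v) = φ u v)
    (t : ℝ) (ht0 : 0 ≤ t) (ht1 : t ≤ 1) :
    Function.Injective
      ((Tg Hplus Hminus hcompl g) ∘ₗ (Tg Hplus Hminus hcompl h)
        + t • Rg Hplus Hminus hcompl g h) := by
  have horth' : ∀ a ∈ Hplus, ∀ u ∈ Hminus, φ u a = 0 := fun a ha u hu => by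
    rw [hφsymm]; exact horth a ha u hu
  rw [← LinearMap.ker_eq_bot, eq_bot_iff]
  intro v hv
  simp only [LinearMap.mem_ker, LinearMap.add_apply, LinearMap.smul_apply,
    LinearMap.comp_apply] at hv
  rw [Submodule.mem_bot]
  by_contra hne
  obtain ⟨u, hu⟩ : ∃ u : H,
      u = h (v : H) - ((Hplus.projectionOnto Hminus hcompl) (h (v : H)) : H) := ⟨_, rfl⟩
  have humem : u ∈ Hminus := hu ▸ sub_proj_mem Hplus Hminus hcompl (h (v : H))
  have hTgsurj : Function.Surjective (Tg Hplus Hminus hcompl g) := by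
    have : FiniteDimensional ℝ Hplus := Module.Finite.of_basis b
    exact (LinearMap.injective_iff_surjective).mp
      (Tg_inj φ Hplus Hminus hcompl hposdef hnegdef g hg)
  obtain ⟨w, hw⟩ := hTgsurj (Rg Hplus Hminus hcompl g h v)
  have hRv : Rg Hplus Hminus hcompl g h v
      = (Hplus.projectionOnto Hminus hcompl) (g u) := by
    rw [hu]; simp [Rg, map_sub]
  have hThv : Tg Hplus Hminus hcompl h v = -(t • w) := by
    have hinj := Tg_inj φ Hplus Hminus hcompl hposdef hnegdef g hg
    apply hinj
    rw [map_neg, _root_.map_smul, hw]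
    exact eq_neg_of_add_eq_zero_left hv
  obtain ⟨a, ha⟩ : ∃ a : H, a = ((Tg Hplus Hminus hcompl h v : Hplus) : H) := ⟨_, rfl⟩
  have hamem : a ∈ Hplus := ha ▸ (Tg Hplus Hminus hcompl h v).2
  have hhv : h (v : H) = a + u := by rw [ha, hu]; simp [Tg]
  have hA : φ a a = φ (v : H) (v : H) - φ u u := by
    have := hh (v : H) (v : H)
    rw [hhv] at this
    have hexp : φ (a + u) (a + u) = φ a a + φ a u + (φ u a + φ u u) := by
      rw [map_add]; simp only [map_add, LinearMap.add_apply]; ring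
    rw [hexp, horth a hamem u humem, horth' a hamem u humem] at this
    linarith
  have hB : φ (w : H) (w : H) ≤ - (φ u u) := by
    have hz : g ((w : H) - u) ∈ Hminus := by
      rw [← Submodule.projectionOnto_apply_eq_zero_iff hcompl]
      have h2 : (Hplus.projectionOnto Hminus hcompl) (g ((w : H) - u))
          = Tg Hplus Hminus hcompl g w
            - (Hplus.projectionOnto Hminus hcompl) (g u) := by
        rw [map_sub, map_sub]; rfl
      rw [h2, hw, hRv, sub_self]
    have hle : φ (g ((w : H) - u)) (g ((w : H) - u)) ≤ 0 := by
      rcases eq_or_ne (g ((w : H) - u)) 0 with h0 | h0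
      · rw [h0]; simp
      · exact le_of_lt (hnegdef _ hz h0)
    rw [hg] at hle
    have hexp : φ ((w : H) - u) ((w : H) - u)
        = φ (w : H) (w : H) - φ (w : H) u - (φ u (w : H) - φ u u) := by
      rw [map_sub]; simp only [map_sub, LinearMap.sub_apply]; ring
    rw [hexp, horth _ w.2 u humem, horth' _ w.2 u humem] at hle
    linarith
  have hv1 : (v : H) ≠ 0 := fun h0 => hne (Subtype.ext h0)
  have hvpos := hposdef _ v.2 hv1
  have hwnn : 0 ≤ φ (w : H) (w : H) := by
    rcases eq_or_ne (w : H) 0 with h0 | h0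
    · rw [h0]; simp
    · exact le_of_lt (hposdef _ w.2 h0)
  have hC : φ a a = t ^ 2 * φ (w : H) (w : H) := by
    rw [ha, hThv]
    push_cast
    simp only [map_neg, _root_.map_smul, LinearMap.neg_apply, LinearMap.smul_apply,
      smul_eq_mul, neg_neg]
    ring
  have ht2 : t ^ 2 ≤ 1 := by nlinarith
  have hkey : t ^ 2 * φ (w : H) (w : H) ≤ φ (w : H) (w : H) :=
    mul_le_of_le_one_left hwnn ht2
  linarith

lemma det_sign_mul (hφsymm : ∀ u v, φ u v = φ v u)
    (horth : ∀ u ∈ Hplus, ∀ v ∈ Hminus, φ u v = 0)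
    (hposdef : ∀ u ∈ Hplus, u ≠ 0 → 0 < φ u u)
    (hnegdef : ∀ v ∈ Hminus, v ≠ 0 → φ v v < 0)
    (b : Module.Basis (Fin p) ℝ Hplus)
    (g h : H ≃ₗ[ℝ] H) (hg : ∀ u v, φ (g u) (g v) = φ u v)
    (hh : ∀ u v, φ (h u) (h v) = φ u v) :
    Real.sign (LinearMap.det (Tg Hplus Hminus hcompl (h.trans g))) =
      Real.sign (LinearMap.det
        ((Tg Hplus Hminus hcompl g) ∘ₗ (Tg Hplus Hminus hcompl h))) := by
  set A0 := LinearMap.toMatrix b b ((Tg Hplus Hminus hcompl g) ∘ₗ (Tg Hplus Hminus hcompl h))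
    with hA0
  set A1 := LinearMap.toMatrix b b (Rg Hplus Hminus hcompl g h) with hA1
  set f : ℝ → ℝ := fun t => (A0 + t • A1).det with hf
  have hmat : ∀ t : ℝ, A0 + t • A1 = LinearMap.toMatrix b b
      ((Tg Hplus Hminus hcompl g) ∘ₗ (Tg Hplus Hminus hcompl h)
        + t • Rg Hplus Hminus hcompl g h) := by
    intro t
    rw [map_add, LinearEquiv.map_smul, hA0, hA1]
  have hcont : Continuous f := by
    apply Continuous.matrix_det
    exact continuous_const.add (continuous_id.smul continuous_const)
  have hno : ∀ t ∈ Set.Icc (0:ℝ) 1, f t ≠ 0 := by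
    intro t ht
    rw [hf]
    simp only
    rw [hmat t, LinearMap.det_toMatrix]
    exact inj_det_ne Hplus _ (homotopy_inj φ Hplus Hminus hcompl hφsymm horth hposdef
      hnegdef b g h hg hh t ht.1 ht.2)
  have h10 := aux_sign_homotopy hcont hno
  have hf1 : f 1 = LinearMap.det (Tg Hplus Hminus hcompl (h.trans g)) := by
    rw [hf]; simp only
    rw [hmat 1, LinearMap.det_toMatrix, one_smul, ← Tg_decomp Hplus Hminus hcompl g h]
  have hf0 : f 0 = LinearMap.det
      ((Tg Hplus Hminus hcompl g) ∘ₗ (Tg Hplus Hminus hcompl h)) := by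
    rw [hf]; simp only
    rw [hmat 0, LinearMap.det_toMatrix, zero_smul, add_zero]
  rw [← hf1, ← hf0, h10]

lemma reflection_exists (hφsymm : ∀ u v, φ u v = φ v u) (e : H) (he : 0 < φ e e) :
    ∃ g : H ≃ₗ[ℝ] H, (∀ u v, φ (g u) (g v) = φ u v) ∧
      ∀ v, g v = v - (2 * φ v e / φ e e) • e := by
  have hqne : φ e e ≠ 0 := ne_of_gt he
  set r : H →ₗ[ℝ] H :=
    LinearMap.id - (2 / φ e e) • (LinearMap.smulRight (φ.flip e) e) with hr
  have hrv : ∀ v, r v = v - (2 * φ v e / φ e e) • e := by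
    intro v
    have hs : (2 / φ e e) * φ v e = 2 * φ v e / φ e e := by ring
    rw [hr]
    simp only [LinearMap.sub_apply, LinearMap.id_apply, LinearMap.smul_apply,
      LinearMap.smulRight_apply, smul_smul]
    have hflip : ((φ.flip e) v) = φ v e := rfl
    rw [hflip, hs]
  have hinv : Function.Involutive r := by
    intro v
    rw [hrv, hrv]
    have h1 : φ (v - (2 * φ v e / φ e e) • e) e = -(φ v e) := by
      rw [map_sub, _root_.map_smul]
      simp only [LinearMap.sub_apply, LinearMap.smul_apply, smul_eq_mul]
      field_simp
      ring
    rw [h1]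
    have h2 : 2 * -(φ v e) / φ e e = -(2 * φ v e / φ e e) := by ring
    rw [h2, neg_smul, sub_neg_eq_add, sub_add_cancel]
  refine ⟨LinearEquiv.ofInvolutive r hinv, ?_, ?_⟩
  · intro u v
    rw [LinearEquiv.coe_ofInvolutive, hrv, hrv]
    simp only [map_sub, _root_.map_smul, LinearMap.sub_apply, LinearMap.smul_apply,
      smul_eq_mul]
    rw [hφsymm e v]
    field_simp
    ring
  · intro v
    rw [LinearEquiv.coe_ofInvolutive, hrv]

end AuxOrient

/-- With `H`, `φ` of signature `(p,·)` as in the context and `x` a basis of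
`H₊`, define `or(g)` as the sign of `G(g·x, x) = det (φ (g xᵢ) (xⱼ))` for a `φ`-preserving
linear automorphism `g`.  Then (i) `or(g) ∈ {−1,+1}`, (ii) `or(gh) = or(g)·or(h)`, and
(iii) some `φ`-preserving automorphism has `or(g) = −1`; that is, `or` is a surjective
homomorphism onto `{±1}`. -/
theorem stmt_2 {H : Type*} [AddCommGroup H] [Module ℝ H]
    (φ : LinearMap.BilinForm ℝ H) (hφsymm : ∀ u v, φ u v = φ v u)
    (p : ℕ) (hp : 1 ≤ p)
    (Hplus Hminus : Submodule ℝ H) (hcompl : IsCompl Hplus Hminus)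
    (horth : ∀ u ∈ Hplus, ∀ v ∈ Hminus, φ u v = 0)
    (hposdef : ∀ u ∈ Hplus, u ≠ 0 → 0 < φ u u)
    (hplusdim : Module.finrank ℝ Hplus = p)
    (hnegdef : ∀ v ∈ Hminus, v ≠ 0 → φ v v < 0)
    (x : Fin p → H)
    (hxli : LinearIndependent ℝ x)
    (hxspan : Submodule.span ℝ (Set.range x) = Hplus) :
    (∀ g : H ≃ₗ[ℝ] H, (∀ u v, φ (g u) (g v) = φ u v) →
      Real.sign (Matrix.det (Matrix.of fun i j => φ (g (x i)) (x j))) = 1 ∨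
      Real.sign (Matrix.det (Matrix.of fun i j => φ (g (x i)) (x j))) = -1) ∧
    (∀ g h : H ≃ₗ[ℝ] H, (∀ u v, φ (g u) (g v) = φ u v) →
      (∀ u v, φ (h u) (h v) = φ u v) →
      Real.sign (Matrix.det (Matrix.of fun i j => φ (g (h (x i))) (x j))) =
        Real.sign (Matrix.det (Matrix.of fun i j => φ (g (x i)) (x j))) *
        Real.sign (Matrix.det (Matrix.of fun i j => φ (h (x i)) (x j)))) ∧
    (∃ g : H ≃ₗ[ℝ] H, (∀ u v, φ (g u) (g v) = φ u v) ∧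
      Real.sign (Matrix.det (Matrix.of fun i j => φ (g (x i)) (x j))) = -1) := by
  classical
  -- basic setup
  have hx : ∀ i, x i ∈ Hplus := fun i => by
    rw [← hxspan]; exact Submodule.subset_span ⟨i, rfl⟩
  set x' : Fin p → Hplus := fun i => ⟨x i, hx i⟩ with hx'
  have hx'li : LinearIndependent ℝ x' := by
    have : LinearIndependent ℝ (Hplus.subtype ∘ x') := hxli
    exact LinearIndependent.of_comp Hplus.subtype this
  haveI : Nonempty (Fin p) := ⟨⟨0, hp⟩⟩
  have hcard : Fintype.card (Fin p) = Module.finrank ℝ Hplus := by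
    simp [hplusdim]
  set b : Module.Basis (Fin p) ℝ Hplus := basisOfLinearIndependentOfCardEqFinrank hx'li hcard
    with hbdef
  have hb : ∀ i, (b i : H) = x i := by
    intro i
    rw [hbdef, coe_basisOfLinearIndependentOfCardEqFinrank]
  -- the Gram matrix
  set X : Matrix (Fin p) (Fin p) ℝ := Matrix.of fun i j => φ (x i) (x j) with hX
  have hXpos : X.PosDef := X_posdef φ Hplus hφsymm hposdef x hxli hx
  have hXdet : 0 < X.det := hXpos.det_pos
  -- determinant formula
  have hdet : ∀ g : H ≃ₗ[ℝ] H,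
      (Matrix.of fun i j => φ (g (x i)) (x j)).det
        = LinearMap.det (Tg Hplus Hminus hcompl g) * X.det := by
    intro g
    rw [Mg_eq φ Hplus Hminus hcompl hφsymm horth x b hb g, Matrix.det_mul,
      Matrix.det_transpose, LinearMap.det_toMatrix]
  have hTdet : ∀ g : H ≃ₗ[ℝ] H, (∀ u v, φ (g u) (g v) = φ u v) →
      LinearMap.det (Tg Hplus Hminus hcompl g) ≠ 0 := fun g hg =>
    inj_det_ne Hplus _ (Tg_inj φ Hplus Hminus hcompl hposdef hnegdef g hg)
  refine ⟨?_, ?_, ?_⟩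
  · -- part (i)
    intro g hg
    have hne : (Matrix.of fun i j => φ (g (x i)) (x j)).det ≠ 0 := by
      rw [hdet g]
      exact mul_ne_zero (hTdet g hg) (ne_of_gt hXdet)
    rcases hne.lt_or_gt with hlt | hlt
    · right; exact Real.sign_of_neg hlt
    · left; exact Real.sign_of_pos hlt
  · -- part (ii)
    intro g h hg hh
    have hgh : ∀ u v, φ ((h.trans g) u) ((h.trans g) v) = φ u v := by
      intro u v
      simp only [LinearEquiv.trans_apply]
      rw [hg, hh]
    have e1 : (Matrix.of fun i j => φ (g (h (x i))) (x j))
        = (Matrix.of fun i j => φ ((h.trans g) (x i)) (x j)) := rfl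
    rw [e1, hdet (h.trans g), hdet g, hdet h,
      aux_sign_mul_pos _ _ hXdet, aux_sign_mul_pos _ _ hXdet, aux_sign_mul_pos _ _ hXdet,
      det_sign_mul φ Hplus Hminus hcompl hφsymm horth hposdef hnegdef b g h hg hh,
      LinearMap.det_comp,
      aux_sign_mul_ne _ _ (hTdet g hg) (hTdet h hh)]
  · -- part (iii)
    set i0 : Fin p := ⟨0, hp⟩ with hi0
    have hene : x i0 ≠ 0 := hxli.ne_zero i0
    have hepos : 0 < φ (x i0) (x i0) := hposdef _ (hx i0) hene
    obtain ⟨g, hgpres, hgv⟩ := reflection_exists φ hφsymm (x i0) hepos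
    refine ⟨g, hgpres, ?_⟩
    set u : Fin p → ℝ := fun i => -(2 * X i i0 / X i0 i0) with hu
    set vv : Fin p → ℝ := Pi.single i0 (1:ℝ) with hvv
    set E : Matrix (Fin p) (Fin p) ℝ := 1 + Matrix.replicateCol Unit u * Matrix.replicateRow Unit vv with hE
    have hME : (Matrix.of fun i j => φ (g (x i)) (x j)) = E * X := by
      ext i j
      have h1 : φ (g (x i)) (x j)
          = φ (x i) (x j) - (2 * φ (x i) (x i0) / φ (x i0) (x i0)) * φ (x i0) (x j) := by
        rw [hgv (x i), map_sub, _root_.map_smul]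
        simp [smul_eq_mul]
      rw [Matrix.of_apply, h1, hE, Matrix.add_mul, Matrix.one_mul]
      simp only [Matrix.add_apply, Matrix.mul_apply, Matrix.replicateCol_apply, Matrix.replicateRow_apply,
        Finset.sum_const, Finset.card_univ, Fintype.card_unit, one_smul, hvv,
        Pi.single_apply, hu]
      rw [Finset.sum_eq_single i0]
      · simp [hX, mul_comm]
        ring
      · intro k _ hk
        simp [hk]
      · intro hmem
        exact absurd (Finset.mem_univ i0) hmem
    have hEdet : E.det = -1 := by
      rw [hE, Matrix.det_one_add_replicateCol_mul_replicateRow]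
      rw [hvv, single_dotProduct, one_mul, hu]
      have : X i0 i0 ≠ 0 := by
        have : X i0 i0 = φ (x i0) (x i0) := rfl
        rw [this]; exact ne_of_gt hepos
      field_simp
      norm_num
    rw [hME, Matrix.det_mul, hEdet]
    have : (-1 : ℝ) * X.det < 0 := by linarith
    exact Real.sign_of_neg this
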